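/- arXiv:2107.00819 — 2 statements merged into one kernel-verified Lean document; each statement's English description precedes it below -/
import Mathlib

section
/- Let f: {0,1}^n → {0,1}, let D be a δ-balanced product distribution on {0,1}^n (each coordinate has expectation in [δ, 1-δ]), and let G be an (α,L)-impurity function. Set κ = max(2/(αδ(1-δ)), L/8). Then for every coordinate i, the G-purity gain of querying x_i on f under D is bounded between (1/κ)·(E[f_{x_i=0}] - E[f_{x_i=1}])^2 and κ·(E[f_{x_i=0}] - E[f_{x_i=1}])^2. -/
open Finset

private lemma sum_weight_split {n : ℕ} (p : Fin n → ℝ) (i : Fin n) (F : (Fin n → Bool) → ℝ) :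
    ∑ x : Fin n → Bool, (∏ j, if x j then p j else 1 - p j) * F x
      = p i * ∑ x : Fin n → Bool,
          (∏ j, if x j then p j else 1 - p j) * F (Function.update x i true)
        + (1 - p i) * ∑ x : Fin n → Bool,
          (∏ j, if x j then p j else 1 - p j) * F (Function.update x i false) := by
  classical
  set w : (Fin n → Bool) → ℝ := fun x => ∏ j, if x j then p j else 1 - p j with hw
  set r : (Fin n → Bool) → ℝ :=
    fun x => ∏ j ∈ univ.erase i, if x j then p j else 1 - p j with hr
  set σ : (Fin n → Bool) → (Fin n → Bool) := fun x => Function.update x i (!(x i)) with hσdef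
  have hinv : Function.Involutive σ := by
    intro x
    funext j
    rcases eq_or_ne j i with rfl | hj
    · simp [σ]
    · simp [σ, Function.update_of_ne hj]
  have hsum : ∀ h : (Fin n → Bool) → ℝ, ∑ x, h x = ∑ x, h (σ x) := by
    intro h
    exact (Equiv.sum_comp hinv.toPerm h).symm
  have hwr : ∀ x, w x = (if x i then p i else 1 - p i) * r x := by
    intro x
    exact (Finset.mul_prod_erase univ _ (mem_univ i)).symm
  have hrσ : ∀ x, r (σ x) = r x := by
    intro x
    refine Finset.prod_congr rfl fun j hj => ?_
    rw [show σ x j = x j from Function.update_of_ne (Finset.ne_of_mem_erase hj) _ _]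
  have hσi : ∀ x, σ x i = !(x i) := fun x => Function.update_self i _ x
  have hupd : ∀ (x : Fin n → Bool) (b : Bool),
      Function.update (σ x) i b = Function.update x i b := by
    intro x b
    funext j
    rcases eq_or_ne j i with rfl | hj
    · simp
    · simp [σ, Function.update_of_ne hj]
  have key : ∀ h : (Fin n → Bool) → ℝ,
      2 * ∑ x, h x = ∑ x, (h x + h (σ x)) := by
    intro h
    rw [Finset.sum_add_distrib, two_mul]
    congr 1
    exact hsum h
  -- doubled identities
  have h1 : 2 * ∑ x, w x * F (Function.update x i true)
      = ∑ x, r x * F (Function.update x i true) := by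
    rw [key]
    refine Finset.sum_congr rfl fun x _ => ?_
    rw [hupd x true, hwr x, hwr (σ x), hrσ, hσi]
    cases hxi : x i <;> simp [hxi] <;> ring
  have h0 : 2 * ∑ x, w x * F (Function.update x i false)
      = ∑ x, r x * F (Function.update x i false) := by
    rw [key]
    refine Finset.sum_congr rfl fun x _ => ?_
    rw [hupd x false, hwr x, hwr (σ x), hrσ, hσi]
    cases hxi : x i <;> simp [hxi] <;> ring
  have hS : 2 * ∑ x, w x * F x
      = ∑ x, (p i * (r x * F (Function.update x i true))
          + (1 - p i) * (r x * F (Function.update x i false))) := by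
    rw [key]
    refine Finset.sum_congr rfl fun x _ => ?_
    rw [hwr x, hwr (σ x), hrσ, hσi]
    have hx1 : Function.update x i (x i) = x := Function.update_eq_self i x
    cases hxi : x i
    · have e1 : σ x = Function.update x i true := by rw [hσdef]; simp [hxi]
      have e0 : Function.update x i false = x := by rw [← hxi]; exact hx1
      rw [e1, e0]
      simp [hxi]
      ring
    · have e1 : σ x = Function.update x i false := by rw [hσdef]; simp [hxi]
      have e0 : Function.update x i true = x := by rw [← hxi]; exact hx1
      rw [e1, e0]
      simp [hxi]
      ring
  have expand : ∑ x, (p i * (r x * F (Function.update x i true))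
          + (1 - p i) * (r x * F (Function.update x i false)))
      = p i * ∑ x, r x * F (Function.update x i true)
        + (1 - p i) * ∑ x, r x * F (Function.update x i false) := by
    rw [Finset.sum_add_distrib, Finset.mul_sum, Finset.mul_sum]
  rw [expand, ← h1, ← h0] at hS
  linarith

private lemma gain_bounds (α L : ℝ) (G G' G'' : ℝ → ℝ)
    (hG' : ∀ x ∈ Set.Icc (0 : ℝ) 1, HasDerivAt G (G' x) x)
    (hG'' : ∀ x ∈ Set.Icc (0 : ℝ) 1, HasDerivAt G' (G'' x) x)
    (hbound : ∀ x ∈ Set.Icc (0 : ℝ) 1, -L ≤ G'' x ∧ G'' x ≤ -α)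
    (a b t : ℝ) (ha : a ∈ Set.Icc (0 : ℝ) 1) (hb : b ∈ Set.Icc (0 : ℝ) 1)
    (ht0 : 0 ≤ t) (ht1 : t ≤ 1) :
    α / 2 * (t * (1 - t)) * (b - a) ^ 2
        ≤ G (t * a + (1 - t) * b) - t * G a - (1 - t) * G b ∧
      G (t * a + (1 - t) * b) - t * G a - (1 - t) * G b
        ≤ L / 2 * (t * (1 - t)) * (b - a) ^ 2 := by
  have hIcc : Convex ℝ (Set.Icc (0 : ℝ) 1) := convex_Icc 0 1
  have hint : interior (Set.Icc (0 : ℝ) 1) ⊆ Set.Icc (0 : ℝ) 1 := interior_subset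
  have hContG : ContinuousOn G (Set.Icc (0 : ℝ) 1) :=
    fun x hx => (hG' x hx).continuousAt.continuousWithinAt
  have hm : t * a + (1 - t) * b ∈ Set.Icc (0 : ℝ) 1 := by
    constructor
    · nlinarith [ha.1, hb.1]
    · nlinarith [ha.2, hb.2]
  -- concavity of G + α/2 x²
  have hconc : ConcaveOn ℝ (Set.Icc (0 : ℝ) 1) (fun x => G x + α / 2 * x ^ 2) := by
    refine concaveOn_of_hasDerivWithinAt2_nonpos (f' := fun x => G' x + α * x)
      (f'' := fun x => G'' x + α) hIcc ?_ ?_ ?_ ?_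
    · exact hContG.add (by fun_prop)
    · intro x hx
      have h1 : HasDerivAt (fun x : ℝ => G x + α / 2 * x ^ 2) (G' x + α * x) x := by
        have := (hG' x (hint hx)).add ((hasDerivAt_pow 2 x).const_mul (α / 2))
        refine this.congr_deriv ?_
        push_cast
        ring
      exact h1.hasDerivWithinAt
    · intro x hx
      have h1 : HasDerivAt (fun x : ℝ => G' x + α * x) (G'' x + α) x := by
        have := (hG'' x (hint hx)).add ((hasDerivAt_id x).const_mul α)
        refine this.congr_deriv ?_
        ring
      exact h1.hasDerivWithinAt
    · intro x hx
      have := (hbound x (hint hx)).2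
      linarith
  -- convexity of G + L/2 x²
  have hconv : ConvexOn ℝ (Set.Icc (0 : ℝ) 1) (fun x => G x + L / 2 * x ^ 2) := by
    refine convexOn_of_hasDerivWithinAt2_nonneg (f' := fun x => G' x + L * x)
      (f'' := fun x => G'' x + L) hIcc ?_ ?_ ?_ ?_
    · exact hContG.add (by fun_prop)
    · intro x hx
      have h1 : HasDerivAt (fun x : ℝ => G x + L / 2 * x ^ 2) (G' x + L * x) x := by
        have := (hG' x (hint hx)).add ((hasDerivAt_pow 2 x).const_mul (L / 2))
        refine this.congr_deriv ?_
        push_cast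
        ring
      exact h1.hasDerivWithinAt
    · intro x hx
      have h1 : HasDerivAt (fun x : ℝ => G' x + L * x) (G'' x + L) x := by
        have := (hG'' x (hint hx)).add ((hasDerivAt_id x).const_mul L)
        refine this.congr_deriv ?_
        ring
      exact h1.hasDerivWithinAt
    · intro x hx
      have := (hbound x (hint hx)).1
      linarith
  have hc := hconc.2 ha hb (show (0:ℝ) ≤ t from ht0)
    (show (0:ℝ) ≤ 1 - t by linarith) (show t + (1 - t) = 1 by ring)
  have hv := hconv.2 ha hb (show (0:ℝ) ≤ t from ht0)
    (show (0:ℝ) ≤ 1 - t by linarith) (show t + (1 - t) = 1 by ring)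
  simp only [smul_eq_mul] at hc hv
  constructor
  · nlinarith [hc]
  · nlinarith [hv]



/-- Lemma 1 of the paper: for `f : {0,1}^n → {0,1}`, a `δ`-balanced product distribution `D`
(with biases `p i ∈ [δ, 1-δ]`), and an `(α,L)`-impurity function `G`, the `G`-purity gain of
querying `x_i` is within a factor `κ = max(2/(αδ(1-δ)), L/8)` of
`(E[f_{x_i=0}] - E[f_{x_i=1}])²`. Expectations are the finite sums weighted by the
product weights `∏ j, if x j then p j else 1 - p j`. -/
theorem purity_gain_vs_diff (n : ℕ) (δ α L : ℝ) (f : (Fin n → Bool) → Bool)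
    (p : Fin n → ℝ) (G G' G'' : ℝ → ℝ)
    (hδ : 0 < δ ∧ δ ≤ 1 / 2) (hαL : 0 < α ∧ α ≤ L)
    (hp : ∀ j, δ ≤ p j ∧ p j ≤ 1 - δ)
    (hG' : ∀ x ∈ Set.Icc (0 : ℝ) 1, HasDerivAt G (G' x) x)
    (hG'' : ∀ x ∈ Set.Icc (0 : ℝ) 1, HasDerivAt G' (G'' x) x)
    (hbound : ∀ x ∈ Set.Icc (0 : ℝ) 1, -L ≤ G'' x ∧ G'' x ≤ -α)
    (i : Fin n) :
    let weight : (Fin n → Bool) → ℝ := fun x => ∏ j, if x j then p j else 1 - p j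
    let E : ((Fin n → Bool) → Bool) → ℝ :=
      fun g => ∑ x : Fin n → Bool, weight x * (if g x then 1 else 0)
    let gain : ℝ :=
      G (E f) - p i * G (E (fun x => f (Function.update x i true)))
        - (1 - p i) * G (E (fun x => f (Function.update x i false)))
    let d : ℝ :=
      E (fun x => f (Function.update x i false)) - E (fun x => f (Function.update x i true))
    let κ : ℝ := max (2 / (α * δ * (1 - δ))) (L / 8)
    (1 / κ) * d ^ 2 ≤ gain ∧ gain ≤ κ * d ^ 2 := by
  intro weight E gain d κ
  obtain ⟨hδ0, hδ2⟩ := hδ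
  obtain ⟨hα, hαL'⟩ := hαL
  have hδ1 : δ < 1 := by linarith
  have hpi := hp i
  -- total weight is 1
  have hsum1 : ∑ x : Fin n → Bool, weight x = 1 := by
    calc ∑ x : Fin n → Bool, weight x
        = ∏ j, ∑ b : Bool, (if b then p j else 1 - p j) :=
          (Fintype.prod_sum fun (j : Fin n) (b : Bool) => if b then p j else 1 - p j).symm
      _ = ∏ j : Fin n, (1 : ℝ) := by
          refine Finset.prod_congr rfl fun j _ => ?_
          rw [Fintype.sum_bool]
          simp
      _ = 1 := Finset.prod_const_one
  have hw0 : ∀ x, (0 : ℝ) ≤ weight x := by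
    intro x
    refine Finset.prod_nonneg fun j _ => ?_
    have := hp j
    cases hxj : x j <;> simp [hxj] <;> linarith [this.1, this.2]
  have hEmem : ∀ g : (Fin n → Bool) → Bool, E g ∈ Set.Icc (0 : ℝ) 1 := by
    intro g
    constructor
    · refine Finset.sum_nonneg fun x _ => mul_nonneg (hw0 x) ?_
      split <;> norm_num
    · calc ∑ x : Fin n → Bool, weight x * (if g x then 1 else 0)
          ≤ ∑ x : Fin n → Bool, weight x := by
            refine Finset.sum_le_sum fun x _ => ?_
            by_cases hgx : g x <;> simp [hgx, hw0 x]
        _ = 1 := hsum1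
  -- split of the expectation along coordinate i
  have hsplit : E f = p i * E (fun x => f (Function.update x i true))
      + (1 - p i) * E (fun x => f (Function.update x i false)) :=
    sum_weight_split p i fun x => if f x then (1 : ℝ) else 0
  set a := E (fun x => f (Function.update x i true)) with haa
  set b := E (fun x => f (Function.update x i false)) with hbb
  have ha : a ∈ Set.Icc (0 : ℝ) 1 := hEmem _
  have hb : b ∈ Set.Icc (0 : ℝ) 1 := hEmem _
  have ht0 : (0 : ℝ) ≤ p i := le_trans (le_of_lt hδ0) hpi.1
  have ht1 : p i ≤ 1 := by linarith [hpi.2]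
  have hbnd := gain_bounds α L G G' G'' hG' hG'' hbound a b (p i) ha hb ht0 ht1
  have hgain : gain = G (p i * a + (1 - p i) * b) - p i * G a - (1 - p i) * G b := by
    show G (E f) - p i * G a - (1 - p i) * G b = _
    rw [hsplit]
  have hd : d = b - a := rfl
  have hlow : α / 2 * (p i * (1 - p i)) * d ^ 2 ≤ gain := by
    rw [hgain, hd]; exact hbnd.1
  have hhigh : gain ≤ L / 2 * (p i * (1 - p i)) * d ^ 2 := by
    rw [hgain, hd]; exact hbnd.2
  have hden : (0 : ℝ) < α * δ * (1 - δ) := mul_pos (mul_pos hα hδ0) (by linarith)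
  have hκ1 : (0 : ℝ) < 2 / (α * δ * (1 - δ)) := div_pos (by norm_num) hden
  have hκpos : (0 : ℝ) < κ := lt_of_lt_of_le hκ1 (le_max_left _ _)
  have h1κ : 1 / κ ≤ α * δ * (1 - δ) / 2 := by
    have h := one_div_le_one_div_of_le hκ1 (le_max_left (2 / (α * δ * (1 - δ))) (L / 8))
    calc 1 / κ ≤ 1 / (2 / (α * δ * (1 - δ))) := h
      _ = α * δ * (1 - δ) / 2 := one_div_div _ _
  have hstep : α * δ * (1 - δ) ≤ α * (p i * (1 - p i)) := by
    have h1 : 0 ≤ (p i - δ) * (1 - p i - δ) :=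
      mul_nonneg (by linarith [hpi.1]) (by linarith [hpi.2])
    nlinarith [mul_nonneg hα.le h1]
  constructor
  · calc 1 / κ * d ^ 2 ≤ (α * δ * (1 - δ) / 2) * d ^ 2 :=
          mul_le_mul_of_nonneg_right h1κ (sq_nonneg d)
      _ ≤ (α * (p i * (1 - p i)) / 2) * d ^ 2 :=
          mul_le_mul_of_nonneg_right (by linarith) (sq_nonneg d)
      _ = α / 2 * (p i * (1 - p i)) * d ^ 2 := by ring
      _ ≤ gain := hlow
  · have hL0 : (0 : ℝ) < L := lt_of_lt_of_le hα hαL'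
    have hq : L / 2 * (p i * (1 - p i)) ≤ L / 8 := by
      nlinarith [sq_nonneg (p i - 1 / 2)]
    calc gain ≤ L / 2 * (p i * (1 - p i)) * d ^ 2 := hhigh
      _ ≤ L / 8 * d ^ 2 := mul_le_mul_of_nonneg_right hq (sq_nonneg d)
      _ ≤ κ * d ^ 2 :=
          mul_le_mul_of_nonneg_right (le_max_right _ _) (sq_nonneg d)
end

section
/- Suppose S_1, ..., S_k ⊆ [m] are sets such that every nonempty collection has symmetric difference of size at least d ≥ (ln 5 / δ)·k, and x_1,...,x_m are independent Bernoulli with E[x_j] ∈ [δ,1-δ]. Define z_i(x) = ⊕_{j∈S_i} x_j. Then for every a ∈ {0,1}^k, |Pr[z(x) = a] - 2^{-k}| ≤ 5^{-k}. -/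
open Finset

private noncomputable def epsR (b : Bool) : ℝ := if b then -1 else 1

private lemma epsR_abs (b : Bool) : |epsR b| = 1 := by cases b <;> simp [epsR]

private lemma epsR_odd (n : ℕ) : epsR (decide (Odd n)) = (-1 : ℝ) ^ n := by
  by_cases h : Odd n
  · simp [epsR, h, h.neg_one_pow]
  · simp [epsR, h, (Nat.not_odd_iff_even.mp h).neg_one_pow]

private lemma epsR_sq (b : Bool) : epsR b * epsR b = 1 := by cases b <;> simp [epsR]

/-- Lemma 4 of the paper: if the sets `S_1, ..., S_k ⊆ [m]` have every nonempty symmetric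
difference of size at least `d ≥ (ln 5/δ)·k`, and `x_1, ..., x_m` are independent bits with
biases `p j ∈ [δ, 1-δ]`, then the address `z(x)` with `z_i(x) = ⊕_{j ∈ S_i} x_j` is almost
uniform: `|Pr[z(x) = a] - 2^{-k}| ≤ 5^{-k}` for every `a ∈ {0,1}^k`. -/
theorem address_almost_uniform (m k d : ℕ) (δ : ℝ) (p : Fin m → ℝ)
    (S : Fin k → Finset (Fin m))
    (hδ : 0 < δ ∧ δ ≤ 1 / 2)
    (hd : Real.log 5 / δ * k ≤ (d : ℝ))
    (hp : ∀ j, δ ≤ p j ∧ p j ≤ 1 - δ)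
    (hS : ∀ I : Finset (Fin k), I.Nonempty →
      d ≤ (Finset.univ.filter
            (fun j => Odd (I.filter (fun i => j ∈ S i)).card)).card)
    (a : Fin k → Bool) :
    |(∑ x : Fin m → Bool,
        (∏ j, if x j then p j else 1 - p j) *
          (if (∀ i, (Odd ((S i).filter (fun j => x j = true)).card ↔ a i = true))
            then (1 : ℝ) else 0)) - (1 / 2) ^ k|
      ≤ (1 / 5 : ℝ) ^ k := by
  classical
  obtain ⟨hδ0, hδ2⟩ := hδ
  set W : (Fin m → Bool) → ℝ := fun x => ∏ j, if x j then p j else 1 - p j with hWdef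
  set z : Fin k → (Fin m → Bool) → Bool :=
    fun i x => decide (Odd ((S i).filter (fun j => x j = true)).card) with hzdef
  set c : Fin k → (Fin m → Bool) → ℝ := fun i x => epsR (a i) * epsR (z i x) with hcdef
  set T : Finset (Fin k) → Finset (Fin m) :=
    fun I => Finset.univ.filter (fun j => Odd (I.filter (fun i => j ∈ S i)).card) with hTdef
  -- Step A: indicator as a product
  have stepA : ∀ x : Fin m → Bool,
      (if (∀ i, (Odd ((S i).filter (fun j => x j = true)).card ↔ a i = true))
        then (1 : ℝ) else 0) = (1/2 : ℝ) ^ k * ∏ i, (1 + c i x) := by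
    intro x
    have key : ∀ i, (Odd ((S i).filter (fun j => x j = true)).card ↔ a i = true) ↔
        z i x = a i := by
      intro i
      cases hai : a i <;> simp [hzdef, hai]
    by_cases h : ∀ i, (Odd ((S i).filter (fun j => x j = true)).card ↔ a i = true)
    · rw [if_pos h]
      have h2 : ∀ i, 1 + c i x = 2 := by
        intro i
        have hz : z i x = a i := (key i).mp (h i)
        rw [hcdef]
        simp only [hz, epsR_sq]
        norm_num
      rw [Finset.prod_congr rfl (fun i _ => h2 i), Finset.prod_const, Finset.card_univ,
        Fintype.card_fin]
      rw [div_pow, one_pow]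
      field_simp
    · rw [if_neg h]
      rw [not_forall] at h
      obtain ⟨i, hi⟩ := h
      have hz : z i x ≠ a i := fun hc => hi ((key i).mpr hc)
      have hzero : 1 + c i x = 0 := by
        rw [hcdef]
        show 1 + epsR (a i) * epsR (z i x) = 0
        revert hz
        cases z i x <;> cases a i <;> simp [epsR]
      rw [Finset.prod_eq_zero (Finset.mem_univ i) hzero, mul_zero]
  -- factorization lemma
  have hfact : ∀ Q : Finset (Fin m),
      (∑ x : Fin m → Bool, W x * ∏ j ∈ Q, epsR (x j))
        = ∏ j : Fin m, (if j ∈ Q then 1 - 2 * p j else 1) := by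
    intro Q
    have h1 : ∀ x : Fin m → Bool, W x * ∏ j ∈ Q, epsR (x j)
        = ∏ j : Fin m, ((if x j then p j else 1 - p j) * (if j ∈ Q then epsR (x j) else 1)) := by
      intro x
      rw [Finset.prod_mul_distrib, hWdef]
      congr 1
      rw [← Finset.prod_filter]
      congr 1
      simp
    calc (∑ x : Fin m → Bool, W x * ∏ j ∈ Q, epsR (x j))
        = ∑ x : Fin m → Bool, ∏ j : Fin m,
            ((if x j then p j else 1 - p j) * (if j ∈ Q then epsR (x j) else 1)) := by
          exact Finset.sum_congr rfl (fun x _ => h1 x)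
      _ = ∏ j : Fin m, ∑ b : Bool,
            ((if b then p j else 1 - p j) * (if j ∈ Q then epsR b else 1)) := by
          rw [Finset.prod_univ_sum]
          rw [Fintype.piFinset_univ]
      _ = ∏ j : Fin m, (if j ∈ Q then 1 - 2 * p j else 1) := by
          refine Finset.prod_congr rfl (fun j _ => ?_)
          rw [Fintype.sum_bool]
          by_cases hj : j ∈ Q <;> simp [hj, epsR] <;> ring
  -- parity lemma
  have hpar : ∀ (I : Finset (Fin k)) (x : Fin m → Bool),
      (∏ i ∈ I, epsR (z i x)) = ∏ j ∈ T I, epsR (x j) := by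
    intro I x
    have hcount : ∀ i, ((S i).filter (fun j => x j = true)).card
        = ∑ j : Fin m, (if j ∈ S i then (if x j = true then 1 else 0) else 0) := by
      intro i
      rw [Finset.card_filter, ← Finset.univ_inter (S i), ← Finset.sum_ite_mem]
      exact Finset.sum_congr rfl (fun j _ => by by_cases h : j ∈ S i <;> simp [h])
    have hsum : ∑ i ∈ I, ((S i).filter (fun j => x j = true)).card
        = ∑ j : Fin m, (if x j = true then (I.filter (fun i => j ∈ S i)).card else 0) := by
      rw [Finset.sum_congr rfl (fun i _ => hcount i), Finset.sum_comm]
      refine Finset.sum_congr rfl (fun j _ => ?_)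
      by_cases hx : x j = true
      · simp only [hx, if_true, Finset.card_filter]
      · simp [hx]
    calc (∏ i ∈ I, epsR (z i x))
        = ∏ i ∈ I, (-1 : ℝ) ^ ((S i).filter (fun j => x j = true)).card := by
          exact Finset.prod_congr rfl (fun i _ => epsR_odd _)
      _ = (-1 : ℝ) ^ (∑ i ∈ I, ((S i).filter (fun j => x j = true)).card) := by
          exact Finset.prod_pow_eq_pow_sum I _ _
      _ = (-1 : ℝ) ^ (∑ j : Fin m, (if x j = true then (I.filter (fun i => j ∈ S i)).card else 0)) := by
          rw [hsum]
      _ = ∏ j : Fin m, (-1 : ℝ) ^ (if x j = true then (I.filter (fun i => j ∈ S i)).card else 0) := by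
          rw [Finset.prod_pow_eq_pow_sum]
      _ = ∏ j : Fin m, (if Odd (I.filter (fun i => j ∈ S i)).card then epsR (x j) else 1) := by
          refine Finset.prod_congr rfl (fun j _ => ?_)
          by_cases hx : x j = true <;> by_cases ho : Odd (I.filter (fun i => j ∈ S i)).card
          · simp [hx, ho, epsR, ho.neg_one_pow]
          · simp [hx, ho, epsR, (Nat.not_odd_iff_even.mp ho).neg_one_pow]
          · simp [hx, ho, epsR]
          · simp [hx, ho, epsR]
      _ = ∏ j ∈ T I, epsR (x j) := by
          rw [hTdef, Finset.prod_filter]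
  -- F values
  set F : Finset (Fin k) → ℝ := fun I => ∑ x : Fin m → Bool, W x * ∏ i ∈ I, c i x with hFdef
  have hFval : ∀ I : Finset (Fin k),
      F I = (∏ i ∈ I, epsR (a i)) * ∏ j : Fin m, (if j ∈ T I then 1 - 2 * p j else 1) := by
    intro I
    rw [hFdef]
    simp only
    have h1 : ∀ x : Fin m → Bool, W x * ∏ i ∈ I, c i x
        = (∏ i ∈ I, epsR (a i)) * (W x * ∏ j ∈ T I, epsR (x j)) := by
      intro x
      rw [hcdef]
      simp only
      rw [Finset.prod_mul_distrib, hpar I x]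
      ring
    rw [Finset.sum_congr rfl (fun x _ => h1 x), ← Finset.mul_sum, hfact]
  -- bound on nonempty F
  have hbd : ∀ I : Finset (Fin k), I.Nonempty → |F I| ≤ (1 - 2*δ) ^ d := by
    intro I hI
    have h2δ : 0 ≤ 1 - 2*δ := by linarith
    rw [hFval, abs_mul]
    have e1 : |∏ i ∈ I, epsR (a i)| = 1 := by
      rw [Finset.abs_prod]
      rw [Finset.prod_congr rfl (fun i _ => epsR_abs (a i)), Finset.prod_const_one]
    rw [e1, one_mul]
    have e2 : (∏ j : Fin m, (if j ∈ T I then 1 - 2 * p j else 1))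
        = ∏ j ∈ T I, (1 - 2 * p j) := by
      rw [← Finset.prod_filter]
      congr 1
      simp
    rw [e2, Finset.abs_prod]
    calc (∏ j ∈ T I, |1 - 2 * p j|) ≤ ∏ j ∈ T I, (1 - 2*δ) := by
          refine Finset.prod_le_prod (fun j _ => abs_nonneg _) (fun j _ => ?_)
          have := hp j
          rw [abs_le]
          constructor <;> linarith [this.1, this.2]
      _ = (1 - 2*δ) ^ (T I).card := by rw [Finset.prod_const]
      _ ≤ (1 - 2*δ) ^ d := by
          apply pow_le_pow_of_le_one h2δ (by linarith) (hS I hI)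
  -- final bound constant
  have hB : (1 - 2*δ) ^ d ≤ (1/5 : ℝ) ^ k := by
    have h2δ : 0 ≤ 1 - 2*δ := by linarith
    have e1 : (1 - 2*δ) ^ d ≤ Real.exp (-(2*δ)) ^ d := by
      apply pow_le_pow_left₀ h2δ
      have := Real.add_one_le_exp (-(2*δ))
      linarith
    have e2 : Real.exp (-(2*δ)) ^ d = Real.exp (-(2*δ) * d) := by
      rw [← Real.exp_nat_mul]
      ring_nf
    have e3 : Real.exp (-(2*δ) * d) ≤ Real.exp (-(Real.log 5 * k)) := by
      apply Real.exp_le_exp.mpr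
      have hδd : Real.log 5 * k ≤ δ * d := by
        have h := mul_le_mul_of_nonneg_left hd (le_of_lt hδ0)
        calc Real.log 5 * k = δ * (Real.log 5 / δ * k) := by field_simp
          _ ≤ δ * d := h
      nlinarith [mul_nonneg (le_of_lt hδ0) (Nat.cast_nonneg d : (0:ℝ) ≤ d)]
    have e4 : Real.exp (-(Real.log 5 * k)) = (1/5 : ℝ) ^ k := by
      have h5 : -(Real.log 5 * (k:ℝ)) = (k:ℝ) * Real.log (1/5) := by
        rw [one_div, Real.log_inv]; ring
      rw [h5, Real.exp_nat_mul, Real.exp_log (by norm_num : (0:ℝ) < 1/5)]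
    calc (1 - 2*δ) ^ d ≤ Real.exp (-(2*δ)) ^ d := e1
      _ = Real.exp (-(2*δ) * d) := e2
      _ ≤ Real.exp (-(Real.log 5 * k)) := e3
      _ = (1/5 : ℝ) ^ k := e4
  -- assemble
  have expand : (∑ x : Fin m → Bool,
      W x * (if (∀ i, (Odd ((S i).filter (fun j => x j = true)).card ↔ a i = true))
            then (1 : ℝ) else 0))
      = (1/2 : ℝ) ^ k * ∑ I ∈ (Finset.univ : Finset (Fin k)).powerset, F I := by
    rw [Finset.sum_congr rfl (fun x _ => by rw [stepA x])]
    have prodadd : ∀ x : Fin m → Bool, (∏ i, (1 + c i x))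
        = ∑ I ∈ (Finset.univ : Finset (Fin k)).powerset, ∏ i ∈ I, c i x := by
      intro x
      have h := Finset.prod_add (fun i => c i x) (fun _ => (1:ℝ)) (Finset.univ : Finset (Fin k))
      simp only [Finset.prod_const_one, mul_one] at h
      rw [Finset.prod_congr rfl (fun i _ => add_comm 1 (c i x)), h]
    rw [Finset.sum_congr rfl (fun x _ => by rw [prodadd x])]
    have swap : ∀ x : Fin m → Bool,
        W x * ((1/2:ℝ) ^ k * ∑ I ∈ (Finset.univ : Finset (Fin k)).powerset, ∏ i ∈ I, c i x)
        = (1/2:ℝ) ^ k * ∑ I ∈ (Finset.univ : Finset (Fin k)).powerset, W x * ∏ i ∈ I, c i x := by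
      intro x
      rw [Finset.mul_sum, Finset.mul_sum, Finset.mul_sum]
      exact Finset.sum_congr rfl (fun I _ => by ring)
    rw [Finset.sum_congr rfl (fun x _ => swap x), ← Finset.mul_sum, Finset.sum_comm]
  have hFempty : F ∅ = 1 := by
    rw [hFval]
    simp [hTdef]
  have main : (∑ x : Fin m → Bool,
      W x * (if (∀ i, (Odd ((S i).filter (fun j => x j = true)).card ↔ a i = true))
            then (1 : ℝ) else 0)) - (1/2 : ℝ) ^ k
      = (1/2 : ℝ) ^ k * ∑ I ∈ ((Finset.univ : Finset (Fin k)).powerset).erase ∅, F I := by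
    rw [expand, ← Finset.add_sum_erase _ F (Finset.empty_mem_powerset _), hFempty]
    ring
  rw [main]
  have h2δ : 0 ≤ 1 - 2*δ := by linarith
  have hcard : ((((Finset.univ : Finset (Fin k)).powerset).erase ∅).card : ℝ) ≤ 2 ^ k := by
    have h1 : (((Finset.univ : Finset (Fin k)).powerset).erase ∅).card
        ≤ ((Finset.univ : Finset (Fin k)).powerset).card :=
      Finset.card_le_card (Finset.erase_subset _ _)
    rw [Finset.card_powerset, Finset.card_univ, Fintype.card_fin] at h1
    calc ((((Finset.univ : Finset (Fin k)).powerset).erase ∅).card : ℝ)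
        ≤ ((2^k : ℕ) : ℝ) := by exact_mod_cast h1
      _ = 2 ^ k := by push_cast; ring
  calc |(1/2 : ℝ) ^ k * ∑ I ∈ ((Finset.univ : Finset (Fin k)).powerset).erase ∅, F I|
      = (1/2 : ℝ) ^ k * |∑ I ∈ ((Finset.univ : Finset (Fin k)).powerset).erase ∅, F I| := by
        rw [abs_mul, abs_pow, abs_of_nonneg (show (0:ℝ) ≤ 1/2 by norm_num)]
    _ ≤ (1/2 : ℝ) ^ k * ∑ I ∈ ((Finset.univ : Finset (Fin k)).powerset).erase ∅, |F I| := by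
        gcongr
        exact Finset.abs_sum_le_sum_abs _ _
    _ ≤ (1/2 : ℝ) ^ k * ∑ I ∈ ((Finset.univ : Finset (Fin k)).powerset).erase ∅, (1 - 2*δ)^d := by
        gcongr with I hI
        exact hbd I (Finset.nonempty_iff_ne_empty.mpr (Finset.ne_of_mem_erase hI))
    _ = (1/2 : ℝ) ^ k * ((((Finset.univ : Finset (Fin k)).powerset).erase ∅).card * (1 - 2*δ)^d) := by
        rw [Finset.sum_const, nsmul_eq_mul]
    _ ≤ (1/2 : ℝ) ^ k * ((2:ℝ)^k * (1 - 2*δ)^d) := by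
        gcongr
    _ = (1 - 2*δ)^d := by
        rw [← mul_assoc, ← mul_pow]
        norm_num
    _ ≤ (1/5 : ℝ) ^ k := hB
end
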